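/- Let A be a finite nonempty set, Ω = A^ℤ, μ a stationary probability measure, and D a shift-invariant sub-σ-algebra with D ⊆ F_{−∞}^0 (the σ-algebra of coordinates with index ≤ 0). Then μ-almost surely, (1/N)∑_{n=0}^{N-1} ‖μ(ζ_n = · | F_0^{n-1}) − μ(ζ_n = · | F_0^{n-1} ∨ D)‖ → 0 as N → ∞. -/

import Mathlib

open MeasureTheory Filter
open scoped NNReal

/-- The left shift on `A^ℤ`. -/
def shiftZ {A : Type*} (ω : ℤ → A) : ℤ → A := fun n => ω (n + 1)

/-- The σ-algebra on `A^ℤ` generated by the coordinates with index in `s`. -/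
def coordSigma (A : Type*) [MeasurableSpace A] (s : Set ℤ) : MeasurableSpace (ℤ → A) :=
  ⨆ k ∈ s, MeasurableSpace.comap (fun ω : ℤ → A => ω k) inferInstance

/-- A version of the conditional probability `μ(ζ_n = a | m)`, as a conditional
expectation of the indicator of `{ζ_n = a}`. -/
noncomputable def condProbCoord {A : Type*} [MeasurableSpace A] [DecidableEq A]
    (μ : Measure (ℤ → A)) (m : MeasurableSpace (ℤ → A)) (n : ℤ) (a : A) : (ℤ → A) → ℝ :=
  μ[fun ω => if ω n = a then (1 : ℝ) else 0 | m]

/-! ### Hopf's maximal ergodic inequality -/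

section Hopf
variable {Ω : Type*}

/-- The maximal process used in the proof of Hopf's maximal ergodic inequality. -/
noncomputable def hopfM (T : Ω → Ω) (f : Ω → ℝ) : ℕ → Ω → ℝ
  | 0 => fun _ => 0
  | N + 1 => fun ω => max 0 (f ω + hopfM T f N (T ω))

variable [m0 : MeasurableSpace Ω] {μ : Measure Ω} [IsProbabilityMeasure μ]

/-- Hopf's maximal ergodic inequality. -/
theorem hopf_maximal (T : Ω → Ω) (hT : MeasurePreserving T μ μ) {h : Ω → ℝ}
    (hmeas : Measurable h) (hint : Integrable h μ) (hnn : ∀ ω, 0 ≤ h ω) {ε : ℝ} (hε : 0 < ε) :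
    μ {ω | ∃ N : ℕ, 0 < N ∧ ε * N < ∑ n ∈ Finset.range N, h (T^[n] ω)} ≤
      ENNReal.ofReal (ε⁻¹ * ∫ x, h x ∂μ) := by
  classical
  set f : Ω → ℝ := fun ω => h ω - ε with hf
  have hfmeas : Measurable f := hmeas.sub measurable_const
  have hfint : Integrable f μ := hint.sub (integrable_const ε)
  -- partial sums
  set S : ℕ → Ω → ℝ := fun k ω => ∑ n ∈ Finset.range k, f (T^[n] ω) with hS
  have hSsucc : ∀ k ω, S (k + 1) ω = f ω + S k (T ω) := by
    intro k ω
    show (∑ n ∈ Finset.range (k+1), f (T^[n] ω)) = f ω + ∑ n ∈ Finset.range k, f (T^[n] (T ω))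
    simp only [Finset.sum_range_succ', Function.iterate_succ_apply, Function.iterate_zero_apply]
    ring
  -- maximal process
  set M : ℕ → Ω → ℝ := hopfM T f with hM
  have hMsucc : ∀ N ω, M (N + 1) ω = max 0 (f ω + M N (T ω)) := fun _ _ => rfl
  have hMmeas : ∀ N, Measurable (M N) := by
    intro N; induction N with
    | zero => exact measurable_const
    | succ N ih =>
        have : Measurable fun ω => max 0 (f ω + M N (T ω)) :=
          measurable_const.max (hfmeas.add (ih.comp hT.measurable))
        exact this
  have hMnn : ∀ N ω, 0 ≤ M N ω := by
    intro N ω; cases N with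
    | zero => exact le_refl _
    | succ N => exact le_max_left _ _
  have hMint : ∀ N, Integrable (M N) μ := by
    intro N; induction N with
    | zero => exact integrable_const 0
    | succ N ih =>
        have h1 : Integrable (fun ω => M N (T ω)) μ :=
          (hT.integrable_comp ih.aestronglyMeasurable).mpr ih
        have : Integrable (fun ω => max 0 (f ω + M N (T ω))) μ :=
          (integrable_const (0:ℝ)).sup (hfint.add h1)
        exact this
  have hMmono : ∀ N ω, M N ω ≤ M (N + 1) ω := by
    intro N
    induction N with
    | zero => intro ω; exact hMnn 1 ω
    | succ N ih =>
        intro ω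
        rw [hMsucc, hMsucc]
        exact max_le_max le_rfl (add_le_add_right (ih (T ω)) _)
  have hSM : ∀ k ω, S k ω ≤ M k ω := by
    intro k
    induction k with
    | zero => intro ω; simp [hS]; exact le_refl _
    | succ k ih =>
        intro ω
        rw [hSsucc, hMsucc]
        exact le_max_of_le_right (add_le_add_right (ih (T ω)) _)
  -- integral over E N of f is nonneg
  set E : ℕ → Set Ω := fun N => {ω | 0 < M N ω} with hE
  have hEmeas : ∀ N, MeasurableSet (E N) := fun N => measurableSet_lt measurable_const (hMmeas N)
  have hintTMN : ∀ N, Integrable (fun ω => M N (T ω)) μ := fun N =>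
    (hT.integrable_comp (hMint N).aestronglyMeasurable).mpr (hMint N)
  have key : ∀ N, 0 ≤ ∫ ω in E (N + 1), f ω ∂μ := by
    intro N
    have heq : ∫ ω in E (N + 1), f ω ∂μ
        = ∫ ω in E (N + 1), (M (N + 1) ω - M N (T ω)) ∂μ := by
      apply setIntegral_congr_fun (hEmeas (N + 1))
      intro ω hω
      have hω' : 0 < M (N + 1) ω := hω
      rw [hMsucc] at hω'
      have h2 : 0 < f ω + M N (T ω) := by
        by_contra hc
        push_neg at hc
        rw [max_eq_left hc] at hω'
        exact lt_irrefl _ hω'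
      show f ω = M (N + 1) ω - M N (T ω)
      rw [hMsucc, max_eq_right h2.le]
      ring
    rw [heq, integral_sub ((hMint (N+1)).integrableOn) ((hintTMN N).integrableOn)]
    have h1 : ∫ ω in E (N + 1), M (N + 1) ω ∂μ = ∫ ω, M (N + 1) ω ∂μ := by
      rw [← integral_add_compl (hEmeas (N+1)) (hMint (N+1))]
      have hc0 : ∫ ω in (E (N+1))ᶜ, M (N + 1) ω ∂μ = 0 := by
        rw [setIntegral_congr_fun (hEmeas (N+1)).compl (g := fun _ => (0:ℝ))]
        · simp
        · intro ω hω
          have h5 : ¬ (0 < M (N+1) ω) := hω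
          have := hMnn (N+1) ω
          show M (N + 1) ω = 0
          linarith [not_lt.mp h5]
      rw [hc0, add_zero]
    have h2 : ∫ ω in E (N + 1), M N (T ω) ∂μ ≤ ∫ ω, M N (T ω) ∂μ := by
      apply setIntegral_le_integral (hintTMN N)
      filter_upwards with ω using hMnn N (T ω)
    have h3 : ∫ ω, M N (T ω) ∂μ = ∫ ω, M N ω ∂μ := by
      rw [← integral_map hT.measurable.aemeasurable (hMmeas N).aestronglyMeasurable, hT.map_eq]
    have h4 : ∫ ω, M N ω ∂μ ≤ ∫ ω, M (N + 1) ω ∂μ :=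
      integral_mono (hMint N) (hMint (N+1)) (fun ω => hMmono N ω)
    linarith
  -- limit over N
  set Abig : Set Ω := ⋃ N, E N with hA
  have hAf : 0 ≤ ∫ ω in Abig, f ω ∂μ := by
    have hmono : Monotone E := by
      intro a b hab
      induction hab with
      | refl => exact le_refl _
      | step _ ih => exact le_trans ih (fun ω hω => lt_of_lt_of_le hω (hMmono _ ω))
    have hten := tendsto_setIntegral_of_monotone hEmeas hmono (hfint.integrableOn (s := Abig))
    have hseq : Tendsto (fun N => ∫ ω in E (N + 1), f ω ∂μ) atTop
        (nhds (∫ ω in Abig, f ω ∂μ)) := hten.comp (tendsto_add_atTop_nat 1)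
    exact ge_of_tendsto hseq (Filter.Eventually.of_forall key)
  -- conclude
  have hsub : {ω | ∃ N : ℕ, 0 < N ∧ ε * N < ∑ n ∈ Finset.range N, h (T^[n] ω)} ⊆ Abig := by
    intro ω hω
    obtain ⟨N, hN, hlt⟩ := hω
    have hSN : 0 < S N ω := by
      have hsum : ∑ n ∈ Finset.range N, f (T^[n] ω)
          = (∑ n ∈ Finset.range N, h (T^[n] ω)) - ε * N := by
        rw [hf, Finset.sum_sub_distrib]
        simp [mul_comm]
      show 0 < ∑ n ∈ Finset.range N, f (T^[n] ω)
      rw [hsum]; linarith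
    exact Set.mem_iUnion.2 ⟨N, lt_of_lt_of_le hSN (hSM N ω)⟩
  have hABound : μ Abig ≤ ENNReal.ofReal (ε⁻¹ * ∫ x, h x ∂μ) := by
    have hfa : ∫ ω in Abig, f ω ∂μ = (∫ ω in Abig, h ω ∂μ) - ε * (μ Abig).toReal := by
      rw [hf, integral_sub (hint.integrableOn) (integrable_const ε).integrableOn]
      simp [mul_comm]
      exact Or.inl rfl
    have hha : ∫ ω in Abig, h ω ∂μ ≤ ∫ ω, h ω ∂μ := by
      apply setIntegral_le_integral hint
      filter_upwards with ω using hnn ω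
    have hμA : ε * (μ Abig).toReal ≤ ∫ ω, h ω ∂μ := by
      rw [hfa] at hAf; linarith
    have htoReal : (μ Abig).toReal ≤ ε⁻¹ * ∫ x, h x ∂μ := by
      have h6 := (le_div_iff₀' hε).mpr hμA
      rwa [div_eq_inv_mul] at h6
    calc μ Abig = ENNReal.ofReal ((μ Abig).toReal) := by
          rw [ENNReal.ofReal_toReal (measure_ne_top μ _)]
      _ ≤ ENNReal.ofReal (ε⁻¹ * ∫ x, h x ∂μ) := ENNReal.ofReal_le_ofReal htoReal
  exact le_trans (measure_mono hsub) hABound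

end Hopf

/-! ### Conditional expectation and measure-preserving equivalences -/

section CondexpComp
variable {Ω : Type*} {m : MeasurableSpace Ω} [m0 : MeasurableSpace Ω] {μ : Measure Ω}
  [IsProbabilityMeasure μ]

/-- Conditional expectation commutes with a measure-preserving measurable equivalence. -/
theorem condexp_comp_measurableEquiv (e : Ω ≃ᵐ Ω) (he : MeasurePreserving e μ μ)
    (hm : m ≤ m0) {f : Ω → ℝ} (hf : Integrable f μ) :
    (fun ω => (μ[f|m]) (e ω)) =ᵐ[μ] μ[fun ω => f (e ω) | m.comap e] := by
  have hm' : m.comap e ≤ m0 :=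
    le_trans (MeasurableSpace.comap_mono hm) (measurable_iff_comap_le.mp e.measurable)
  haveI : SigmaFinite (μ.trim hm') := by
    have : IsFiniteMeasure (μ.trim hm') := isFiniteMeasure_trim hm'
    infer_instance
  have hfe : Integrable (fun ω => f (e ω)) μ := by
    have := (he.integrable_comp hf.aestronglyMeasurable).mpr hf
    exact this
  have hge : Integrable (fun ω => (μ[f|m]) (e ω)) μ := by
    have := (he.integrable_comp (integrable_condExp (f := f) (m := m)).aestronglyMeasurable).mpr
      (integrable_condExp (f := f) (m := m))
    exact this
  refine ae_eq_condExp_of_forall_setIntegral_eq hm' hfe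
    (fun s _ _ => hge.integrableOn) (fun s hs _ => ?_) ?_
  · obtain ⟨t, ht, rfl⟩ := hs
    rw [he.setIntegral_preimage_emb e.measurableEmbedding,
      he.setIntegral_preimage_emb e.measurableEmbedding,
      setIntegral_condExp hm hf ht]
  · refine StronglyMeasurable.aestronglyMeasurable ?_
    exact (stronglyMeasurable_condExp (f := f) (m := m)).comp_measurable
      (Measurable.of_comap_le le_rfl)

end CondexpComp

/-! ### The shift and coordinate σ-algebras -/

section Shift
variable (A : Type*) [MeasurableSpace A]

/-- The shift as a measurable equivalence. -/
def shiftME : (ℤ → A) ≃ᵐ (ℤ → A) where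
  toFun := shiftZ
  invFun ω := fun n => ω (n - 1)
  left_inv ω := funext fun n => by simp [shiftZ]
  right_inv ω := funext fun n => by simp [shiftZ]
  measurable_toFun := measurable_pi_lambda _ fun n => measurable_pi_apply _
  measurable_invFun := measurable_pi_lambda _ fun n => measurable_pi_apply _

/-- Iterates of the shift as measurable equivalences. -/
def shiftMEn : ℕ → ((ℤ → A) ≃ᵐ (ℤ → A))
  | 0 => MeasurableEquiv.refl _
  | n + 1 => (shiftMEn n).trans (shiftME A)

lemma shiftME_apply (ω : ℤ → A) (k : ℤ) : shiftME A ω k = ω (k + 1) := rfl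

lemma shiftMEn_apply (n : ℕ) (ω : ℤ → A) (k : ℤ) : shiftMEn A n ω k = ω (k + n) := by
  induction n generalizing ω k with
  | zero => simp [shiftMEn]
  | succ n ih =>
      show shiftME A (shiftMEn A n ω) k = ω (k + (n + 1 : ℕ))
      rw [shiftME_apply, ih]
      congr 1
      push_cast
      ring

lemma shiftMEn_coe (n : ℕ) : (shiftMEn A n : (ℤ → A) → (ℤ → A)) = shiftZ^[n] := by
  induction n with
  | zero => rfl
  | succ n ih =>
      funext ω
      show shiftME A (shiftMEn A n ω) = shiftZ^[n + 1] ω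
      rw [Function.iterate_succ_apply']
      rw [← ih]
      rfl

lemma measurePreserving_shiftMEn (μ : Measure (ℤ → A)) (hstat : MeasurePreserving shiftZ μ μ)
    (n : ℕ) : MeasurePreserving (shiftMEn A n) μ μ := by
  rw [show (shiftMEn A n : (ℤ → A) → (ℤ → A)) = shiftZ^[n] from shiftMEn_coe A n]
  exact hstat.iterate n

lemma coordSigma_le (s : Set ℤ) : coordSigma A s ≤ MeasurableSpace.pi := by
  refine iSup₂_le fun k _ => ?_
  exact measurable_iff_comap_le.mp (measurable_pi_apply k)

lemma coordSigma_mono {s t : Set ℤ} (h : s ⊆ t) : coordSigma A s ≤ coordSigma A t :=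
  iSup₂_le fun k hk => le_iSup₂ (f := fun k (_ : k ∈ t) =>
    MeasurableSpace.comap (fun ω : ℤ → A => ω k) inferInstance) k (h hk)

lemma coordSigma_comap (c : ℤ) (s : Set ℤ) :
    (coordSigma A s).comap (fun ω k => ω (k + c)) = coordSigma A ((fun k => k + c) '' s) := by
  rw [coordSigma, coordSigma, iSup_image]
  simp only [MeasurableSpace.comap_iSup, MeasurableSpace.comap_comp]
  rfl

end Shift

def shiftInv {A : Type*} (ω : ℤ → A) : ℤ → A := fun n => ω (n - 1)

lemma shiftZ_comp_shiftInv {A : Type*} : shiftZ (A := A) ∘ shiftInv = id := by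
  funext ω n
  show ω (n + 1 - 1) = ω n
  norm_num

lemma shiftInv_eq {A : Type*} : (shiftInv (A := A)) = fun ω k => ω (k + (-1)) := by
  funext ω k
  show ω (k - 1) = ω (k + (-1))
  rw [sub_eq_add_neg]

section Dlemmas
variable {A : Type*} [MeasurableSpace A] {D : MeasurableSpace (ℤ → A)}

lemma shiftZ_surjective : Function.Surjective (shiftZ (A := A)) :=
  (shiftME A).surjective

lemma shiftZ_injective : Function.Injective (shiftZ (A := A)) :=
  (shiftME A).injective

lemma D_comap_shiftZ
    (hDinv : ∀ S : Set (ℤ → A), MeasurableSet[D] S ↔ MeasurableSet[D] (shiftZ '' S)) :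
    D.comap shiftZ = D := by
  ext s
  rw [MeasurableSpace.measurableSet_comap]
  constructor
  · rintro ⟨t, ht, rfl⟩
    refine (hDinv _).mpr ?_
    rwa [Set.image_preimage_eq _ shiftZ_surjective]
  · intro hs
    exact ⟨shiftZ '' s, (hDinv s).mp hs, Set.preimage_image_eq s shiftZ_injective⟩

lemma D_comap_shiftZ_iterate
    (hDinv : ∀ S : Set (ℤ → A), MeasurableSet[D] S ↔ MeasurableSet[D] (shiftZ '' S)) (n : ℕ) :
    D.comap (shiftZ^[n]) = D := by
  induction n with
  | zero => simp [MeasurableSpace.comap_id]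
  | succ n ih =>
      rw [Function.iterate_succ, ← MeasurableSpace.comap_comp, ih, D_comap_shiftZ hDinv]

lemma D_le_Iic_neg_one (hD : D ≤ coordSigma A (Set.Iic 0))
    (hDinv : ∀ S : Set (ℤ → A), MeasurableSet[D] S ↔ MeasurableSet[D] (shiftZ '' S)) :
    D ≤ coordSigma A (Set.Iic (-1)) := by
  intro s hs
  have hU : MeasurableSet[D] (shiftZ ⁻¹' s) := by
    have : MeasurableSet[D.comap shiftZ] (shiftZ ⁻¹' s) :=
      MeasurableSpace.measurableSet_comap.mpr ⟨s, hs, rfl⟩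
    rwa [D_comap_shiftZ hDinv] at this
  have hU' : MeasurableSet[coordSigma A (Set.Iic 0)] (shiftZ ⁻¹' s) := hD _ hU
  have hs' : MeasurableSet[(coordSigma A (Set.Iic 0)).comap (fun ω k => ω (k + (-1)))] s := by
    rw [← shiftInv_eq]
    refine MeasurableSpace.measurableSet_comap.mpr ⟨shiftZ ⁻¹' s, hU', ?_⟩
    rw [← Set.preimage_comp, shiftZ_comp_shiftInv, Set.preimage_id]
  rwa [coordSigma_comap, Set.image_add_const_Iic, show (0 : ℤ) + (-1) = -1 by ring] at hs'

end Dlemmas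

/-! ### Lévy's upward theorem applied to the prediction problem -/

section Levy
variable {A : Type} [Fintype A] [Nonempty A] [DecidableEq A]
  [MeasurableSpace A] [MeasurableSingletonClass A]

/-- The indicator of the event `ζ_0 = a`. -/
def indicatorZeta (a : A) : (ℤ → A) → ℝ := fun ω => if ω (0:ℤ) = a then (1:ℝ) else 0

lemma indicatorZeta_integrable (μ : Measure (ℤ → A)) [IsProbabilityMeasure μ] (a : A) :
    Integrable (indicatorZeta a) μ := by
  have hset : MeasurableSet {ω : ℤ → A | ω (0:ℤ) = a} := by
    have h0 : MeasurableSet ((fun ω : ℤ → A => ω (0:ℤ)) ⁻¹' {a}) :=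
      (measurable_pi_apply (0:ℤ)) (measurableSet_singleton a)
    exact h0
  have : indicatorZeta a = Set.indicator {ω : ℤ → A | ω (0:ℤ) = a} (fun _ => (1:ℝ)) := by
    funext ω
    simp [indicatorZeta, Set.indicator_apply, Set.mem_setOf_eq]
  rw [this]
  exact (integrable_const (1:ℝ)).indicator hset

theorem levy_diff_tendsto (μ : Measure (ℤ → A)) [IsProbabilityMeasure μ]
    (D : MeasurableSpace (ℤ → A)) (hD1 : D ≤ coordSigma A (Set.Iic (-1))) :
    ∀ᵐ ω ∂μ, Tendsto (fun n : ℕ => ⨆ a : A,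
      |condProbCoord μ (coordSigma A (Set.Icc (-(n:ℤ)) (-1))) 0 a ω -
        condProbCoord μ (coordSigma A (Set.Icc (-(n:ℤ)) (-1)) ⊔ D) 0 a ω|)
      atTop (nhds 0) := by
  -- the filtrations
  have hIccMono : Monotone fun n : ℕ => Set.Icc (-(n:ℤ)) (-1) := by
    intro a b hab
    apply Set.Icc_subset_Icc _ le_rfl
    omega
  set ℱ : Filtration ℕ (MeasurableSpace.pi : MeasurableSpace (ℤ → A)) :=
    ⟨fun n => coordSigma A (Set.Icc (-(n:ℤ)) (-1)),
      fun a b hab => coordSigma_mono A (hIccMono hab),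
      fun n => coordSigma_le A _⟩ with hℱ
  set 𝒢 : Filtration ℕ (MeasurableSpace.pi : MeasurableSpace (ℤ → A)) :=
    ⟨fun n => coordSigma A (Set.Icc (-(n:ℤ)) (-1)) ⊔ D,
      fun a b hab => sup_le_sup (coordSigma_mono A (hIccMono hab)) le_rfl,
      fun n => sup_le (coordSigma_le A _) (hD1.trans (coordSigma_le A _))⟩ with h𝒢
  -- the supremum σ-algebras
  have hsupF : (⨆ n, (ℱ n : MeasurableSpace (ℤ → A))) = coordSigma A (Set.Iic (-1)) := by
    apply le_antisymm
    · exact iSup_le fun n => coordSigma_mono A Set.Icc_subset_Iic_self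
    · refine iSup₂_le fun k hk => ?_
      have hk1 : k ≤ -1 := hk
      have hkmem : k ∈ Set.Icc (-(((-k).toNat : ℕ) : ℤ)) (-1) := by
        constructor
        · rw [Int.toNat_of_nonneg (by omega : (0:ℤ) ≤ -k)]; omega
        · exact hk1
      calc MeasurableSpace.comap (fun ω : ℤ → A => ω k) inferInstance
          ≤ coordSigma A (Set.Icc (-(((-k).toNat : ℕ) : ℤ)) (-1)) :=
            le_iSup₂ (f := fun j (_ : j ∈ Set.Icc (-(((-k).toNat : ℕ) : ℤ)) (-1)) =>
              MeasurableSpace.comap (fun ω : ℤ → A => ω j) inferInstance) k hkmem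
        _ ≤ ⨆ n, (ℱ n : MeasurableSpace (ℤ → A)) := le_iSup (fun n : ℕ =>
            (ℱ n : MeasurableSpace (ℤ → A))) ((-k).toNat)
  have hsupG : (⨆ n, (𝒢 n : MeasurableSpace (ℤ → A))) = coordSigma A (Set.Iic (-1)) := by
    have : (⨆ n, (𝒢 n : MeasurableSpace (ℤ → A)))
        = (⨆ n, (ℱ n : MeasurableSpace (ℤ → A))) ⊔ D := by
      rw [iSup_sup]
    rw [this, hsupF, sup_eq_left.mpr hD1]
  -- Lévy's upward theorem for each letter
  have hlevy : ∀ a : A, ∀ᵐ ω ∂μ, Tendsto (fun n : ℕ =>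
      (μ[indicatorZeta a|ℱ n]) ω - (μ[indicatorZeta a|𝒢 n]) ω) atTop (nhds 0) := by
    intro a
    have h1 := tendsto_ae_condExp (μ := μ) (ℱ := ℱ) (indicatorZeta a)
    have h2 := tendsto_ae_condExp (μ := μ) (ℱ := 𝒢) (indicatorZeta a)
    rw [hsupF] at h1
    rw [hsupG] at h2
    filter_upwards [h1, h2] with ω h1ω h2ω
    have := h1ω.sub h2ω
    simpa using this
  rw [← ae_all_iff] at hlevy
  filter_upwards [hlevy] with ω hω
  show Tendsto (fun n : ℕ => ⨆ a : A,
      |(μ[indicatorZeta a|ℱ n]) ω - (μ[indicatorZeta a|𝒢 n]) ω|) atTop (nhds 0)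
  have hsum : Tendsto (fun n : ℕ => ∑ a : A,
      |(μ[indicatorZeta a|ℱ n]) ω - (μ[indicatorZeta a|𝒢 n]) ω|) atTop (nhds 0) := by
    have h0 := tendsto_finset_sum (Finset.univ : Finset A)
      (fun a (_ : a ∈ Finset.univ) => (hω a).abs)
    simpa using h0
  refine squeeze_zero (fun n => ?_) (fun n => ?_) hsum
  · obtain ⟨a0⟩ := (inferInstance : Nonempty A)
    have hba : BddAbove (Set.range fun a : A =>
        |(μ[indicatorZeta a|ℱ n]) ω - (μ[indicatorZeta a|𝒢 n]) ω|) :=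
      Set.Finite.bddAbove (Set.finite_range _)
    calc (0:ℝ) ≤ |(μ[indicatorZeta a0|ℱ n]) ω - (μ[indicatorZeta a0|𝒢 n]) ω| := abs_nonneg _
      _ ≤ _ := le_ciSup hba a0
  · exact ciSup_le fun a => Finset.single_le_sum
      (f := fun b : A => |(μ[indicatorZeta b|ℱ n]) ω - (μ[indicatorZeta b|𝒢 n]) ω|)
      (fun b _ => abs_nonneg _) (Finset.mem_univ a)

/-! ### Transfer by stationarity -/

lemma comap_coordSigma_shiftMEn (n : ℕ) (s : Set ℤ) :
    (coordSigma A s).comap (shiftMEn A n) = coordSigma A ((fun k => k + (n:ℤ)) '' s) := by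
  rw [show ((shiftMEn A n : (ℤ → A) ≃ᵐ (ℤ → A)) : (ℤ → A) → (ℤ → A))
      = fun ω k => ω (k + (n:ℤ)) from funext fun ω => funext fun k => shiftMEn_apply A n ω k]
  rw [coordSigma_comap]

lemma condProb_shift (μ : Measure (ℤ → A)) [IsProbabilityMeasure μ]
    (hstat : MeasurePreserving (shiftZ (A := A)) μ μ)
    {m : MeasurableSpace (ℤ → A)} (hm : m ≤ MeasurableSpace.pi) (n : ℕ) (a : A) :
    (fun ω => condProbCoord μ m 0 a (shiftMEn A n ω))
      =ᵐ[μ] condProbCoord μ (m.comap (shiftMEn A n)) (n:ℤ) a := by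
  letI : MeasurableSpace (ℤ → A) := MeasurableSpace.pi
  have h := condexp_comp_measurableEquiv (shiftMEn A n)
    (measurePreserving_shiftMEn A μ hstat n) hm (indicatorZeta_integrable μ a)
  have hfe : (fun ω : ℤ → A => indicatorZeta a (shiftMEn A n ω))
      = fun ω : ℤ → A => if ω ((n:ℤ)) = a then (1:ℝ) else 0 := by
    funext ω
    show (if (shiftMEn A n ω) (0:ℤ) = a then (1:ℝ) else 0) = _
    rw [shiftMEn_apply, zero_add]
  rw [hfe] at h
  exact h

end Levy

/-! ### The main theorem -/

/-- Theorem 2 of the paper: for a stationary `μ` on `A^ℤ` and a shift-invariant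
sub-σ-algebra `D ⊆ F_{-∞}^0`, the predictions given `F_0^{n-1}` and given
`F_0^{n-1} ∨ D` agree in the strong Cesàro sense, `μ`-a.s. -/
theorem weak_learnability_induced_decomposition
    {A : Type} [Fintype A] [Nonempty A] [DecidableEq A]
    [MeasurableSpace A] [MeasurableSingletonClass A]
    (μ : Measure (ℤ → A)) [IsProbabilityMeasure μ]
    (hstat : MeasurePreserving (shiftZ (A := A)) μ μ)
    (D : MeasurableSpace (ℤ → A)) (hD : D ≤ coordSigma A (Set.Iic 0))
    (hDinv : ∀ S : Set (ℤ → A), MeasurableSet[D] S ↔ MeasurableSet[D] (shiftZ '' S)) :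
    ∀ᵐ ω ∂μ,
      Tendsto (fun N : ℕ =>
          (∑ n ∈ Finset.range N, ⨆ a : A,
            |condProbCoord μ (coordSigma A (Set.Icc 0 ((n : ℤ) - 1))) n a ω -
              condProbCoord μ (coordSigma A (Set.Icc 0 ((n : ℤ) - 1)) ⊔ D) n a ω|) / N)
        atTop (nhds 0) := by
  classical
  letI : MeasurableSpace (ℤ → A) := MeasurableSpace.pi
  have hD1 : D ≤ coordSigma A (Set.Iic (-1)) := D_le_Iic_neg_one hD hDinv
  -- the backward prediction differences
  set g : ℕ → (ℤ → A) → ℝ := fun n ω => ⨆ a : A,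
      |condProbCoord μ (coordSigma A (Set.Icc (-(n:ℤ)) (-1))) 0 a ω -
        condProbCoord μ (coordSigma A (Set.Icc (-(n:ℤ)) (-1)) ⊔ D) 0 a ω| with hgdef
  have hgtend : ∀ᵐ ω ∂μ, Tendsto (fun n => g n ω) atTop (nhds 0) :=
    levy_diff_tendsto μ D hD1
  have hmF : ∀ n : ℕ, coordSigma A (Set.Icc (-(n:ℤ)) (-1)) ≤ MeasurableSpace.pi :=
    fun n => coordSigma_le A _
  have hmG : ∀ n : ℕ, coordSigma A (Set.Icc (-(n:ℤ)) (-1)) ⊔ D ≤ MeasurableSpace.pi :=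
    fun n => sup_le (coordSigma_le A _) (hD1.trans (coordSigma_le A _))
  have hgmeas : ∀ n, Measurable[(MeasurableSpace.pi : MeasurableSpace (ℤ → A))] (g n) := by
    intro n
    apply Measurable.iSup
    intro a
    apply Measurable.abs
    apply Measurable.sub
    · exact (stronglyMeasurable_condExp.mono (hmF n)).measurable
    · exact (stronglyMeasurable_condExp.mono (hmG n)).measurable
  have hgnn : ∀ n ω, 0 ≤ g n ω := by
    intro n ω
    obtain ⟨a0⟩ := (inferInstance : Nonempty A)
    have hba : BddAbove (Set.range fun a : A =>
        |condProbCoord μ (coordSigma A (Set.Icc (-(n:ℤ)) (-1))) 0 a ω -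
          condProbCoord μ (coordSigma A (Set.Icc (-(n:ℤ)) (-1)) ⊔ D) 0 a ω|) :=
      Set.Finite.bddAbove (Set.finite_range _)
    exact le_trans (abs_nonneg _) (le_ciSup hba a0)
  have hgle2 : ∀ n, ∀ᵐ ω ∂μ, g n ω ≤ 2 := by
    intro n
    have hb : ∀ (m' : MeasurableSpace (ℤ → A)), ∀ a : A, ∀ᵐ ω ∂μ,
        |condProbCoord μ m' 0 a ω| ≤ ((1 : ℝ≥0) : ℝ) := by
      intro m' a
      refine ae_bdd_condExp_of_ae_bdd (R := 1) (Filter.Eventually.of_forall fun ω => ?_)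
      show |if ω (0:ℤ) = a then (1:ℝ) else 0| ≤ ((1:ℝ≥0) : ℝ)
      split_ifs <;> norm_num
    have h1 := ae_all_iff.mpr (fun a : A => hb (coordSigma A (Set.Icc (-(n:ℤ)) (-1))) a)
    have h2 := ae_all_iff.mpr (fun a : A => hb (coordSigma A (Set.Icc (-(n:ℤ)) (-1)) ⊔ D) a)
    filter_upwards [h1, h2] with ω h1ω h2ω
    refine ciSup_le fun a => ?_
    have ha1 : |condProbCoord μ (coordSigma A (Set.Icc (-(n:ℤ)) (-1))) 0 a ω| ≤ (1:ℝ) := by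
      simpa using h1ω a
    have ha2 : |condProbCoord μ (coordSigma A (Set.Icc (-(n:ℤ)) (-1)) ⊔ D) 0 a ω| ≤ (1:ℝ) := by
      simpa using h2ω a
    have h3 := abs_add_le (condProbCoord μ (coordSigma A (Set.Icc (-(n:ℤ)) (-1))) 0 a ω)
      (-(condProbCoord μ (coordSigma A (Set.Icc (-(n:ℤ)) (-1)) ⊔ D) 0 a ω))
    rw [abs_neg] at h3
    rw [sub_eq_add_neg]
    linarith
  -- the tail suprema
  set G : ℕ → (ℤ → A) → ℝ := fun m ω => ⨆ k : ℕ, min (g (m + k) ω) 2 with hGdef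
  have hGbdd : ∀ m ω, BddAbove (Set.range fun k : ℕ => min (g (m + k) ω) 2) := by
    intro m ω
    refine ⟨2, ?_⟩
    rintro x ⟨k, rfl⟩
    exact min_le_right _ _
  have hGmeas : ∀ m, Measurable[(MeasurableSpace.pi : MeasurableSpace (ℤ → A))] (G m) :=
    fun m => Measurable.iSup fun k => (hgmeas (m + k)).min measurable_const
  have hGnn : ∀ m ω, 0 ≤ G m ω := by
    intro m ω
    have h0 : (0:ℝ) ≤ min (g (m + 0) ω) 2 := le_min (hgnn _ ω) (by norm_num)
    exact le_trans h0 (le_ciSup (hGbdd m ω) 0)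
  have hGle2 : ∀ m ω, G m ω ≤ 2 := fun m ω => ciSup_le fun k => min_le_right _ _
  have hGge : ∀ m n ω, m ≤ n → min (g n ω) 2 ≤ G m ω := by
    intro m n ω hmn
    have h0 : n = m + (n - m) := by omega
    rw [h0]
    exact le_ciSup (hGbdd m ω) (n - m)
  have hGint : ∀ m, Integrable (G m) μ := by
    intro m
    refine Integrable.mono' (integrable_const 2) ((hGmeas m).aestronglyMeasurable)
      (Filter.Eventually.of_forall fun ω => ?_)
    rw [Real.norm_eq_abs, abs_of_nonneg (hGnn m ω)]
    exact hGle2 m ω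
  have hGtend0 : ∀ᵐ ω ∂μ, Tendsto (fun m => G m ω) atTop (nhds 0) := by
    filter_upwards [hgtend] with ω hω
    rw [Metric.tendsto_atTop] at hω ⊢
    intro ε hε
    obtain ⟨M, hM⟩ := hω (ε/2) (half_pos hε)
    refine ⟨M, fun m hm => ?_⟩
    rw [Real.dist_eq, sub_zero, abs_of_nonneg (hGnn m ω)]
    have hsup : G m ω ≤ ε/2 := by
      refine ciSup_le fun k => ?_
      have := hM (m + k) (by omega)
      rw [Real.dist_eq, sub_zero] at this
      have h6 : g (m + k) ω < ε / 2 := lt_of_abs_lt this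
      exact le_trans (min_le_left _ _) h6.le
    linarith
  have hGL1 : Tendsto (fun m => ∫ ω, G m ω ∂μ) atTop (nhds 0) := by
    have h0 := tendsto_integral_of_dominated_convergence (μ := μ)
      (F := fun m ω => G m ω) (f := fun _ => (0:ℝ)) (fun _ => (2:ℝ))
      (fun m => (hGmeas m).aestronglyMeasurable) (integrable_const 2)
      (fun m => Filter.Eventually.of_forall fun ω => by
        rw [Real.norm_eq_abs, abs_of_nonneg (hGnn m ω)]; exact hGle2 m ω)
      hGtend0
    simpa using h0
  -- transfer by stationarity
  have hDcomap : ∀ n : ℕ, D.comap (shiftMEn A n) = D := by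
    intro n
    rw [show ((shiftMEn A n : (ℤ → A) ≃ᵐ (ℤ → A)) : (ℤ → A) → (ℤ → A)) = shiftZ^[n]
      from shiftMEn_coe A n]
    exact D_comap_shiftZ_iterate hDinv n
  have hIcc : ∀ n : ℕ, (fun k => k + (n:ℤ)) '' Set.Icc (-(n:ℤ)) (-1)
      = Set.Icc 0 ((n:ℤ) - 1) := by
    intro n
    rw [Set.image_add_const_Icc]
    congr 1 <;> ring
  have hcmF : ∀ n : ℕ, (coordSigma A (Set.Icc (-(n:ℤ)) (-1))).comap (shiftMEn A n)
      = coordSigma A (Set.Icc 0 ((n:ℤ) - 1)) := by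
    intro n
    rw [comap_coordSigma_shiftMEn, hIcc]
  have hcmG : ∀ n : ℕ, (coordSigma A (Set.Icc (-(n:ℤ)) (-1)) ⊔ D).comap (shiftMEn A n)
      = coordSigma A (Set.Icc 0 ((n:ℤ) - 1)) ⊔ D := by
    intro n
    rw [MeasurableSpace.comap_sup, hcmF, hDcomap]
  have htransF : ∀ n : ℕ, ∀ a : A,
      (fun ω => condProbCoord μ (coordSigma A (Set.Icc (-(n:ℤ)) (-1))) 0 a (shiftMEn A n ω))
        =ᵐ[μ] condProbCoord μ (coordSigma A (Set.Icc 0 ((n:ℤ) - 1))) (n:ℤ) a := by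
    intro n a
    have h := condProb_shift μ hstat (hmF n) n a
    rwa [hcmF n] at h
  have htransG : ∀ n : ℕ, ∀ a : A,
      (fun ω => condProbCoord μ (coordSigma A (Set.Icc (-(n:ℤ)) (-1)) ⊔ D) 0 a (shiftMEn A n ω))
        =ᵐ[μ] condProbCoord μ (coordSigma A (Set.Icc 0 ((n:ℤ) - 1)) ⊔ D) (n:ℤ) a := by
    intro n a
    have h := condProb_shift μ hstat (hmG n) n a
    rwa [hcmG n] at h
  -- the identification of the summands
  have hterm : ∀ᵐ ω ∂μ, ∀ n : ℕ,
      (⨆ a : A, |condProbCoord μ (coordSigma A (Set.Icc 0 ((n : ℤ) - 1))) n a ω -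
          condProbCoord μ (coordSigma A (Set.Icc 0 ((n : ℤ) - 1)) ⊔ D) n a ω|)
        = g n (shiftZ^[n] ω) ∧ g n (shiftZ^[n] ω) ≤ 2 := by
    rw [ae_all_iff]
    intro n
    have hF := ae_all_iff.mpr (fun a : A => htransF n a)
    have hG' := ae_all_iff.mpr (fun a : A => htransG n a)
    have hb : ∀ᵐ ω ∂μ, g n (shiftZ^[n] ω) ≤ 2 :=
      (hstat.iterate n).quasiMeasurePreserving.ae (hgle2 n)
    filter_upwards [hF, hG', hb] with ω hFω hGω hbω
    refine ⟨?_, hbω⟩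
    have hcoe : shiftMEn A n ω = shiftZ^[n] ω := by
      rw [← shiftMEn_coe A n]
    refine iSup_congr fun a => ?_
    have h1 := hFω a
    have h2 := hGω a
    rw [hcoe] at h1 h2
    rw [h1, h2]
  -- the bad sets from the maximal inequality
  have hbad : ∀ j : ℕ, ∀ᵐ ω ∂μ, ∃ m : ℕ, ∀ N : ℕ, 0 < N →
      ∑ n ∈ Finset.range N, G m (shiftZ^[n] ω) ≤ (1/((j:ℝ)+1))/2 * N := by
    intro j
    set ε2 : ℝ := (1/((j:ℝ)+1))/2 with hε2def
    have hε2pos : 0 < ε2 := by positivity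
    have hμB : μ (⋂ m : ℕ, {ω : ℤ → A | ∃ N : ℕ, 0 < N ∧
        ε2 * N < ∑ n ∈ Finset.range N, G m (shiftZ^[n] ω)}) = 0 := by
      refine le_antisymm ?_ zero_le
      have hb : ∀ m : ℕ, μ (⋂ m' : ℕ, {ω : ℤ → A | ∃ N : ℕ, 0 < N ∧
          ε2 * N < ∑ n ∈ Finset.range N, G m' (shiftZ^[n] ω)})
          ≤ ENNReal.ofReal (ε2⁻¹ * ∫ x, G m x ∂μ) := by
        intro m
        refine le_trans (measure_mono (Set.iInter_subset _ m)) ?_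
        exact hopf_maximal shiftZ hstat (hGmeas m) (hGint m) (hGnn m) hε2pos
      have hlim : Tendsto (fun m => ENNReal.ofReal (ε2⁻¹ * ∫ x, G m x ∂μ)) atTop (nhds 0) := by
        have h7 := hGL1.const_mul ε2⁻¹
        rw [mul_zero] at h7
        have h8 := ENNReal.tendsto_ofReal h7
        simpa using h8
      exact ge_of_tendsto hlim (Filter.Eventually.of_forall hb)
    have h9 := measure_eq_zero_iff_ae_notMem.mp hμB
    filter_upwards [h9] with ω hω
    rw [Set.mem_iInter] at hω
    push_neg at hω
    obtain ⟨m, hm⟩ := hω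
    rw [Set.mem_setOf_eq] at hm
    push_neg at hm
    exact ⟨m, hm⟩
  rw [← ae_all_iff] at hbad
  -- conclusion
  filter_upwards [hterm, hbad] with ω htermω hbadω
  rw [NormedAddCommGroup.tendsto_nhds_zero]
  intro ε hε
  obtain ⟨j, hj⟩ := exists_nat_one_div_lt hε
  obtain ⟨m, hm⟩ := hbadω j
  set εj : ℝ := 1/((j:ℝ)+1) with hεjdef
  have hεjpos : 0 < εj := by positivity
  have hA1 : Tendsto (fun N : ℕ => (2*m : ℝ)/(N:ℝ)) atTop (nhds 0) :=
    tendsto_const_div_atTop_nhds_zero_nat (2*m : ℝ)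
  have hev1 : ∀ᶠ N : ℕ in atTop, (2*m : ℝ)/(N:ℝ) < ε - εj/2 :=
    hA1.eventually_lt_const (by simp only [hεjdef]; linarith)
  filter_upwards [hev1, eventually_gt_atTop 0] with N hN1 hN2
  have hNpos : (0:ℝ) < N := by exact_mod_cast hN2
  -- bound the sum
  have hterm_le : ∀ n ∈ Finset.range N,
      (⨆ a : A, |condProbCoord μ (coordSigma A (Set.Icc 0 ((n : ℤ) - 1))) n a ω -
          condProbCoord μ (coordSigma A (Set.Icc 0 ((n : ℤ) - 1)) ⊔ D) n a ω|)
        ≤ (if n < m then (2:ℝ) else 0) + G m (shiftZ^[n] ω) := by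
    intro n _
    obtain ⟨heq, hle2⟩ := htermω n
    rw [heq]
    by_cases hnm : n < m
    · rw [if_pos hnm]
      linarith [hGnn m (shiftZ^[n] ω)]
    · rw [if_neg hnm]
      have h10 : min (g n (shiftZ^[n] ω)) 2 = g n (shiftZ^[n] ω) := min_eq_left hle2
      have h11 := hGge m n (shiftZ^[n] ω) (by omega)
      rw [h10] at h11
      linarith
  have hsum_le : (∑ n ∈ Finset.range N, ⨆ a : A,
      |condProbCoord μ (coordSigma A (Set.Icc 0 ((n : ℤ) - 1))) n a ω -
        condProbCoord μ (coordSigma A (Set.Icc 0 ((n : ℤ) - 1)) ⊔ D) n a ω|)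
      ≤ 2*m + εj/2 * N := by
    calc (∑ n ∈ Finset.range N, ⨆ a : A,
        |condProbCoord μ (coordSigma A (Set.Icc 0 ((n : ℤ) - 1))) n a ω -
          condProbCoord μ (coordSigma A (Set.Icc 0 ((n : ℤ) - 1)) ⊔ D) n a ω|)
        ≤ ∑ n ∈ Finset.range N, ((if n < m then (2:ℝ) else 0) + G m (shiftZ^[n] ω)) :=
          Finset.sum_le_sum hterm_le
      _ = (∑ n ∈ Finset.range N, if n < m then (2:ℝ) else 0)
          + ∑ n ∈ Finset.range N, G m (shiftZ^[n] ω) := Finset.sum_add_distrib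
      _ ≤ 2*m + εj/2 * N := by
          have hpart1 : (∑ n ∈ Finset.range N, if n < m then (2:ℝ) else 0) ≤ 2*m := by
            rw [← Finset.sum_filter]
            have hcard : ((Finset.range N).filter (fun n => n < m)).card ≤ m := by
              have hss : (Finset.range N).filter (fun n => n < m) ⊆ Finset.range m := by
                intro x hx
                rw [Finset.mem_filter] at hx
                exact Finset.mem_range.mpr hx.2
              calc ((Finset.range N).filter (fun n => n < m)).card
                  ≤ (Finset.range m).card := Finset.card_le_card hss
                _ = m := Finset.card_range m
            rw [Finset.sum_const, nsmul_eq_mul]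
            calc (((Finset.range N).filter (fun n => n < m)).card : ℝ) * 2
                ≤ (m : ℝ) * 2 := by
                  apply mul_le_mul_of_nonneg_right _ (by norm_num)
                  exact_mod_cast hcard
              _ = 2*m := by ring
          have hpart2 : ∑ n ∈ Finset.range N, G m (shiftZ^[n] ω) ≤ εj/2 * N := by
            have := hm N hN2
            calc ∑ n ∈ Finset.range N, G m (shiftZ^[n] ω)
                ≤ (1/((j:ℝ)+1))/2 * N := this
              _ = εj/2 * N := by rw [hεjdef]
          linarith
  have hsum_nn : 0 ≤ ∑ n ∈ Finset.range N, ⨆ a : A,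
      |condProbCoord μ (coordSigma A (Set.Icc 0 ((n : ℤ) - 1))) n a ω -
        condProbCoord μ (coordSigma A (Set.Icc 0 ((n : ℤ) - 1)) ⊔ D) n a ω| := by
    apply Finset.sum_nonneg
    intro n _
    rw [(htermω n).1]
    exact hgnn n _
  rw [Real.norm_eq_abs, abs_of_nonneg (div_nonneg hsum_nn hNpos.le), div_lt_iff₀ hNpos]
  have h12 : (2:ℝ)*m < (ε - εj/2) * N := by
    rw [div_lt_iff₀ hNpos] at hN1
    exact hN1
  calc (∑ n ∈ Finset.range N, ⨆ a : A,
      |condProbCoord μ (coordSigma A (Set.Icc 0 ((n : ℤ) - 1))) n a ω -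
        condProbCoord μ (coordSigma A (Set.Icc 0 ((n : ℤ) - 1)) ⊔ D) n a ω|)
      ≤ 2*m + εj/2 * N := hsum_le
    _ < (ε - εj/2) * N + εj/2 * N := by linarith
    _ = ε * N := by ring
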